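/- Let (y_t)_{t=0}^T be an ℝ^d-valued martingale with a.s. strictly positive components and let x = (x_t)_{t=0}^T be an adapted process with x_{-1} = 0 and x_T = 0 such that M_s := ∑_{t=0}^s x_{t-1}·(y_t − y_{t-1}) defines a martingale, and let c = (c_t)_{t=0}^T be an adapted process with c_t ∈ ℝ^d_+ a.s. and y_t·(x_t − x_{t−1} + c_t) ≤ 0 a.s. for all t. Then c_t = 0 a.s. for all t. -/

import Mathlib

open MeasureTheory Finset

lemma telescope_inner (d : ℕ) (a b : ℕ → EuclideanSpace ℝ (Fin d)) (n : ℕ) :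
    ∑ t ∈ range (n + 1),
      ((inner ℝ (if t = 0 then (0 : EuclideanSpace ℝ (Fin d)) else a (t - 1))
          (b t - if t = 0 then 0 else b (t - 1)) : ℝ)
        + (inner ℝ (b t) (a t - (if t = 0 then 0 else a (t - 1))) : ℝ))
      = (inner ℝ (b n) (a n) : ℝ) := by
  induction n with
  | zero => simp
  | succ n ih =>
      rw [Finset.sum_range_succ, ih]
      simp only [Nat.succ_ne_zero, if_neg, Nat.add_sub_cancel, if_false, inner_sub_right]
      rw [real_inner_comm (a n) (b (n + 1)), real_inner_comm (b n) (a n)]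
      ring

/-- A strictly positive martingale deflator kills nonnegative hedgeable claim processes:
if `y·(Δx_t + c_t) ≤ 0` a.s. with `c_t ≥ 0`, `x_T = 0` and the stochastic-integral-type
process `M` is a martingale, then `c_t = 0` a.s. for all `t ≤ T`. -/
theorem deflator_kills_nonneg_claims {Ω : Type*} {m0 : MeasurableSpace Ω}
    {P : Measure Ω} [IsProbabilityMeasure P] (d T : ℕ)
    (ℱ : Filtration ℕ m0)
    (y x c : ℕ → Ω → EuclideanSpace ℝ (Fin d))
    (hy : Martingale y ℱ P)
    (hypos : ∀ t, ∀ᵐ ω ∂P, ∀ i, 0 < y t ω i)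
    (hx : ∀ t, Measurable[ℱ t] (x t))
    (hxT : ∀ᵐ ω ∂P, x T ω = 0)
    (hM : Martingale (fun s ω => ∑ t ∈ range (s + 1),
        (inner ℝ (if t = 0 then (0 : EuclideanSpace ℝ (Fin d)) else x (t - 1) ω)
          (y t ω - if t = 0 then 0 else y (t - 1) ω) : ℝ)) ℱ P)
    (hc : ∀ t, Measurable[ℱ t] (c t))
    (hcpos : ∀ t, ∀ᵐ ω ∂P, ∀ i, 0 ≤ c t ω i)
    (hcint : ∀ t, Integrable (fun ω => (inner ℝ (c t ω) (y t ω) : ℝ)) P)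
    (hineq : ∀ t ≤ T, ∀ᵐ ω ∂P,
      (inner ℝ (y t ω) (x t ω - (if t = 0 then 0 else x (t - 1) ω) + c t ω) : ℝ) ≤ 0) :
    ∀ t ≤ T, ∀ᵐ ω ∂P, c t ω = 0 := by
  set M : ℕ → Ω → ℝ := fun s ω => ∑ t ∈ range (s + 1),
      (inner ℝ (if t = 0 then (0 : EuclideanSpace ℝ (Fin d)) else x (t - 1) ω)
        (y t ω - if t = 0 then 0 else y (t - 1) ω) : ℝ) with hMdef
  set S : Ω → ℝ := fun ω => ∑ t ∈ range (T + 1), (inner ℝ (c t ω) (y t ω) : ℝ) with hSdef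
  have hSint : Integrable S P := integrable_finset_sum _ fun t _ => hcint t
  -- combine a.e. hypotheses
  have hineq' : ∀ᵐ ω ∂P, ∀ t, t ≤ T →
      (inner ℝ (y t ω) (x t ω - (if t = 0 then 0 else x (t - 1) ω) + c t ω) : ℝ) ≤ 0 := by
    rw [ae_all_iff]
    intro t
    by_cases ht : t ≤ T
    · exact (hineq t ht).mono fun ω h _ => h
    · filter_upwards with ω h; exact absurd h ht
  have hpos' : ∀ᵐ ω ∂P, ∀ t, ∀ i, 0 ≤ c t ω i ∧ 0 < y t ω i := by
    rw [ae_all_iff]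
    intro t
    filter_upwards [hcpos t, hypos t] with ω h1 h2 i
    exact ⟨h1 i, h2 i⟩
  -- S ≤ M T a.e.
  have hSle : S ≤ᵐ[P] M T := by
    filter_upwards [hineq', hxT] with ω hω hx0
    have htel := telescope_inner d (fun t => x t ω) (fun t => y t ω) T
    have key : M T ω + ∑ t ∈ range (T + 1),
        (inner ℝ (y t ω) (x t ω - (if t = 0 then 0 else x (t - 1) ω)) : ℝ)
        = (inner ℝ (y T ω) (x T ω) : ℝ) := by
      rw [hMdef, ← Finset.sum_add_distrib]
      exact htel
    have hsum : ∑ t ∈ range (T + 1),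
        ((inner ℝ (y t ω) (x t ω - (if t = 0 then 0 else x (t - 1) ω)) : ℝ)
          + (inner ℝ (c t ω) (y t ω) : ℝ))
        = ∑ t ∈ range (T + 1),
          (inner ℝ (y t ω) (x t ω - (if t = 0 then 0 else x (t - 1) ω) + c t ω) : ℝ) := by
      refine Finset.sum_congr rfl fun t _ => ?_
      rw [inner_add_right, real_inner_comm (c t ω) (y t ω)]
    have hle : ∑ t ∈ range (T + 1),
        ((inner ℝ (y t ω) (x t ω - (if t = 0 then 0 else x (t - 1) ω)) : ℝ)
          + (inner ℝ (c t ω) (y t ω) : ℝ)) ≤ 0 := by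
      rw [hsum]
      exact Finset.sum_nonpos fun t ht => hω t (Nat.lt_succ_iff.mp (Finset.mem_range.mp ht))
    rw [Finset.sum_add_distrib] at hle
    have : (inner ℝ (y T ω) (x T ω) : ℝ) = 0 := by rw [hx0, inner_zero_right]
    simp only [hSdef]
    linarith [key, hle, this]
  -- ∫ M T = 0
  have hMT0 : ∫ ω, M T ω ∂P = 0 := by
    have h1 : ∫ ω, M T ω ∂P = ∫ ω, M 0 ω ∂P := by
      rw [← integral_condExp (ℱ.le 0)]
      exact integral_congr_ae (hM.condExp_ae_eq (Nat.zero_le T))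
    have h2 : ∀ ω, M 0 ω = 0 := by intro ω; simp [hMdef]
    rw [h1]
    simp [h2]
  -- S ≥ 0 a.e.
  have hSnn : 0 ≤ᵐ[P] S := by
    filter_upwards [hpos'] with ω hω
    refine Finset.sum_nonneg fun t _ => ?_
    simp only [PiLp.inner_apply, RCLike.inner_apply, conj_trivial]
    exact Finset.sum_nonneg fun i _ => mul_nonneg (hω t i).2.le (hω t i).1
  -- ∫ S = 0 hence S = 0 a.e.
  have hS0 : S =ᵐ[P] 0 := by
    have h1 : ∫ ω, S ω ∂P ≤ 0 := by
      calc ∫ ω, S ω ∂P ≤ ∫ ω, M T ω ∂P := integral_mono_ae hSint (hM.integrable T) hSle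
      _ = 0 := hMT0
    have h2 : 0 ≤ ∫ ω, S ω ∂P := integral_nonneg_of_ae hSnn
    exact (integral_eq_zero_iff_of_nonneg_ae hSnn hSint).mp (le_antisymm h1 h2)
  -- conclude
  intro t ht
  filter_upwards [hS0, hpos'] with ω hω hpω
  have hterm : (inner ℝ (c t ω) (y t ω) : ℝ) = 0 := by
    have hnn : ∀ s ∈ range (T + 1), (0:ℝ) ≤ (inner ℝ (c s ω) (y s ω) : ℝ) := by
      intro s _
      simp only [PiLp.inner_apply, RCLike.inner_apply, conj_trivial]
      exact Finset.sum_nonneg fun i _ => mul_nonneg (hpω s i).2.le (hpω s i).1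
    have := (Finset.sum_eq_zero_iff_of_nonneg hnn).mp hω
    exact this t (Finset.mem_range.mpr (Nat.lt_succ_of_le ht))
  ext i
  have : ∑ i, c t ω i * y t ω i = 0 := by
    simpa [PiLp.inner_apply, RCLike.inner_apply, conj_trivial, mul_comm] using hterm
  have hieq := (Finset.sum_eq_zero_iff_of_nonneg
    (fun i _ => mul_nonneg (hpω t i).1 (hpω t i).2.le)).mp this i (Finset.mem_univ i)
  have hy := (hpω t i).2
  have h0 : (0 : EuclideanSpace ℝ (Fin d)) i = 0 := rfl
  rw [h0]
  nlinarith [hieq, hy, (hpω t i).1]
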